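/- Let V be a finite-dimensional real normed vector space and K ⊆ V a nonempty compact convex set whose affine span equals V. Then for every linear functional ψ on the real vector space of affine maps V → ℝ there exist x, y ∈ K and scalars λ, μ ≥ 0 such that ψ(f) = λ · f(x) − μ · f(y) for every affine map f : V → ℝ. -/

import Mathlib

open Module

section Aux

variable {V : Type*} [NormedAddCommGroup V] [NormedSpace ℝ V] [FiniteDimensional ℝ V]

/-- Evaluation at a point, as a linear functional on affine maps. -/
noncomputable def evalAff (x : V) : Module.Dual ℝ (V →ᵃ[ℝ] ℝ) where
  toFun f := f x
  map_add' f g := rfl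
  map_smul' c f := rfl

@[simp] lemma evalAff_apply (x : V) (f : V →ᵃ[ℝ] ℝ) : evalAff x f = f x := rfl

lemma affine_combo (f : V →ᵃ[ℝ] ℝ) {a b : ℝ} (x y : V) (hab : a + b = 1) :
    f (a • x + b • y) = a * f x + b * f y := by
  have ha : a = 1 - b := by linarith
  subst ha
  have h1 : (1 - b) • x + b • y = AffineMap.lineMap x y b :=
    (AffineMap.lineMap_apply_module x y b).symm
  rw [h1, AffineMap.apply_lineMap, AffineMap.lineMap_apply_module]
  simp only [smul_eq_mul]
  try ring

instance : FiniteDimensional ℝ (V →ᵃ[ℝ] ℝ) :=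
  LinearEquiv.finiteDimensional
    ((AffineMap.toConstProdLinearMap ℝ : (V →ᵃ[ℝ] ℝ) ≃ₗ[ℝ] ℝ × (V →ₗ[ℝ] ℝ)).symm)

lemma vanish_of_affineSpan {K : Set V} (hspan : affineSpan ℝ K = ⊤)
    {x₀ : V} (hx₀ : x₀ ∈ K)
    (f : V →ᵃ[ℝ] ℝ) (hf : ∀ x ∈ K, f x = 0) : f = 0 := by
  have hvs : vectorSpan ℝ K = ⊤ := by
    rw [← direction_affineSpan, hspan, AffineSubspace.direction_top]
  have hlin : f.linear = 0 := by
    have hle : vectorSpan ℝ K ≤ LinearMap.ker f.linear := by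
      rw [vectorSpan_eq_span_vsub_set_right ℝ hx₀, Submodule.span_le]
      rintro v ⟨a, ha, rfl⟩
      have hv : f.linear (a -ᵥ x₀) = f a -ᵥ f x₀ := f.linearMap_vsub a x₀
      rw [SetLike.mem_coe, LinearMap.mem_ker, hv, hf a ha, hf x₀ hx₀]
      simp
    rw [hvs, top_le_iff] at hle
    exact LinearMap.ker_eq_top.mp hle
  ext x
  have : f x - f x₀ = f.linear (x - x₀) := (f.linearMap_vsub x x₀).symm
  rw [hlin] at this
  simp only [LinearMap.zero_apply] at this
  have := sub_eq_zero.mp this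
  simp [this, hf x₀ hx₀]

end Aux

theorem functional_eq_diff_of_point_evaluations
    {V : Type*} [NormedAddCommGroup V] [NormedSpace ℝ V] [FiniteDimensional ℝ V]
    (K : Set V) (hne : K.Nonempty) (hcomp : IsCompact K) (hconv : Convex ℝ K)
    (hspan : affineSpan ℝ K = ⊤)
    (ψ : (V →ᵃ[ℝ] ℝ) →ₗ[ℝ] ℝ) :
    ∃ x ∈ K, ∃ y ∈ K, ∃ l m : ℝ, 0 ≤ l ∧ 0 ≤ m ∧
      ∀ f : V →ᵃ[ℝ] ℝ, ψ f = l * f x - m * f y := by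
  obtain ⟨x₀, hx₀⟩ := hne
  -- the cone collapse lemma
  have collapse : ∀ x ∈ K, ∀ y ∈ K, ∀ l m : ℝ, 0 ≤ l → 0 ≤ m →
      ∃ z ∈ K, ∃ n : ℝ, 0 ≤ n ∧ l • evalAff x + m • evalAff y = n • evalAff (z : V) := by
    intro x hx y hy l m hl hm
    rcases eq_or_lt_of_le (add_nonneg hl hm) with h0 | hpos
    · have hl0 : l = 0 := by linarith
      have hm0 : m = 0 := by linarith
      exact ⟨x, hx, 0, le_refl 0, by simp [hl0, hm0]⟩
    · set n := l + m with hn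
      refine ⟨(l / n) • x + (m / n) • y,
        hconv hx hy (by positivity) (by positivity) (by field_simp; linarith), n, le_of_lt hpos, ?_⟩
      ext f
      simp only [LinearMap.add_apply, LinearMap.smul_apply, evalAff_apply, smul_eq_mul]
      rw [affine_combo f x y (by field_simp; linarith)]
      field_simp
      try ring
  -- the submodule of differences of nonnegative evaluations
  set T : Submodule ℝ (Module.Dual ℝ (V →ᵃ[ℝ] ℝ)) :=
    { carrier := {φ | ∃ x ∈ K, ∃ y ∈ K, ∃ l m : ℝ, 0 ≤ l ∧ 0 ≤ m ∧
        φ = l • evalAff x - m • evalAff y}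
      add_mem' := by
        rintro φ φ' ⟨x, hx, y, hy, l, m, hl, hm, rfl⟩ ⟨x', hx', y', hy', l', m', hl', hm', rfl⟩
        obtain ⟨z, hz, n, hn, hzn⟩ := collapse x hx x' hx' l l' hl hl'
        obtain ⟨w, hw, p, hp, hwp⟩ := collapse y hy y' hy' m m' hm hm'
        exact ⟨z, hz, w, hw, n, p, hn, hp, by rw [← hzn, ← hwp]; try abel⟩
      zero_mem' := ⟨x₀, hx₀, x₀, hx₀, 0, 0, le_refl 0, le_refl 0, by simp⟩
      smul_mem' := by
        rintro c φ ⟨x, hx, y, hy, l, m, hl, hm, rfl⟩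
        rcases le_or_gt 0 c with hc | hc
        · exact ⟨x, hx, y, hy, c * l, c * m, mul_nonneg hc hl, mul_nonneg hc hm, by
            rw [smul_sub, smul_smul, smul_smul]⟩
        · refine ⟨y, hy, x, hx, (-c) * m, (-c) * l,
            mul_nonneg (by linarith) hm, mul_nonneg (by linarith) hl, ?_⟩
          rw [smul_sub, smul_smul, smul_smul]
          module }
  -- the evaluations span the dual
  have hT : Submodule.span ℝ (evalAff '' K) ≤ T := by
    rw [Submodule.span_le]
    rintro φ ⟨x, hx, rfl⟩
    exact ⟨x, hx, x₀, hx₀, 1, 0, zero_le_one, le_refl 0, by simp⟩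
  have hspan' : Submodule.span ℝ (evalAff '' K) = ⊤ := by
    apply Submodule.span_eq_top_of_ne_zero
    intro f hf
    by_contra h
    push_neg at h
    refine hf (vanish_of_affineSpan hspan hx₀ f ?_)
    intro x hx
    have := h (evalAff x) ⟨x, hx, rfl⟩
    simpa using this
  have hψ : ψ ∈ T := hT (by rw [hspan']; trivial)
  obtain ⟨x, hx, y, hy, l, m, hl, hm, hψeq⟩ := hψ
  refine ⟨x, hx, y, hy, l, m, hl, hm, fun f => ?_⟩
  rw [hψeq]
  simp
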